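/- Let A be a nonzero m×n real matrix and b ∈ ℝᵐ such that the polyhedron S = {y ∈ ℝⁿ : (Ay)_i ≤ b_i for all i} is nonempty. Then for every x ∈ ℝⁿ and every stepsize α ≥ 0, one step of the doubly stochastic alternating projection algorithm satisfies Σ_{i=1}^{m} Σ_{j=1}^{n} p_{ij} dist(x⁺(i,j), S)² ≤ dist(x, S)² + ((n·α² − 2α)/‖A‖_F²)·‖(Ax − b)₊‖², where dist(·, S) is the Euclidean distance to S. (Intermediate bound in the proof of Theorem 4.) -/

import Mathlib

open Matrix BigOperators

/-- Squared Frobenius norm of a matrix. -/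
noncomputable def frobSq {m n : ℕ} (A : Matrix (Fin m) (Fin n) ℝ) : ℝ :=
  ∑ i, ∑ j, (A i j) ^ 2

/-- One step of the doubly stochastic alternating projection algorithm (Algorithm 2):
if the selected inequality `i` is satisfied, nothing changes; otherwise coordinate `j`
is updated via the Gauss–Seidel rule (with the convention `x⁺ = x` when `A i j = 0`). -/
noncomputable def dsapStep {m n : ℕ} (A : Matrix (Fin m) (Fin n) ℝ) (b : Fin m → ℝ)
    (α : ℝ) (x : EuclideanSpace ℝ (Fin n)) (i : Fin m) (j : Fin n) :
    EuclideanSpace ℝ (Fin n) :=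
  if A.mulVec x i ≤ b i then x
  else if A i j = 0 then x
  else WithLp.toLp 2 (Function.update x j (x j + α * ((b i - A.mulVec x i) / A i j)))

/-- The componentwise positive part `(A x - b)₊` of the residual. -/
noncomputable def posRes {m n : ℕ} (A : Matrix (Fin m) (Fin n) ℝ) (b : Fin m → ℝ)
    (x : EuclideanSpace ℝ (Fin n)) : EuclideanSpace ℝ (Fin m) :=
  WithLp.toLp 2 (fun i => max 0 (A.mulVec x i - b i))

private lemma eucl_norm_sq {k : ℕ} (v : EuclideanSpace ℝ (Fin k)) :
    ‖v‖ ^ 2 = ∑ i, (v i) ^ 2 := by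
  rw [EuclideanSpace.norm_eq, Real.sq_sqrt (by positivity)]
  simp [Real.norm_eq_abs, sq_abs]

private lemma eucl_dist_sq {k : ℕ} (x y : EuclideanSpace ℝ (Fin k)) :
    dist x y ^ 2 = ∑ i, (x i - y i) ^ 2 := by
  rw [EuclideanSpace.dist_eq, Real.sq_sqrt (by positivity)]
  simp [Real.dist_eq, sq_abs]

private lemma dist_update_sq {k : ℕ} (x y z : EuclideanSpace ℝ (Fin k)) (j : Fin k) (v : ℝ)
    (hz : z = Function.update x j v) :
    dist z y ^ 2 = dist x y ^ 2 - (x j - y j) ^ 2 + (v - y j) ^ 2 := by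
  rw [eucl_dist_sq z y, eucl_dist_sq x y]
  have h : ∀ i, (z i - y i) ^ 2
      = Function.update (fun i => (x i - y i) ^ 2) j ((v - y j) ^ 2) i := by
    intro i
    by_cases hij : i = j
    · subst hij; simp [hz]
    · simp [hz, Function.update_of_ne hij]
  simp_rw [h]
  rw [Finset.sum_update_of_mem (Finset.mem_univ j),
    Finset.sum_sdiff_eq_sub (Finset.subset_univ {j}), Finset.sum_singleton]
  ring

theorem dsap_dist_intermediate_bound {m n : ℕ} (A : Matrix (Fin m) (Fin n) ℝ)
    (hA : A ≠ 0) (b : Fin m → ℝ)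
    (S : Set (EuclideanSpace ℝ (Fin n)))
    (hS : S = {y : EuclideanSpace ℝ (Fin n) | ∀ i, A.mulVec y i ≤ b i})
    (hS_ne : S.Nonempty)
    (x : EuclideanSpace ℝ (Fin n)) (α : ℝ) (hα : 0 ≤ α) :
    ∑ i, ∑ j, ((A i j) ^ 2 / frobSq A) * (Metric.infDist (dsapStep A b α x i j) S) ^ 2 ≤
      (Metric.infDist x S) ^ 2 +
        (((n : ℝ) * α ^ 2 - 2 * α) / frobSq A) * ‖posRes A b x‖ ^ 2 := by
  classical
  have hF : 0 < frobSq A := by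
    show 0 < ∑ i, ∑ j, (A i j) ^ 2
    obtain ⟨i, j, hij⟩ : ∃ i j, A i j ≠ 0 := by
      by_contra h
      push_neg at h
      exact hA (by ext i j; simpa using h i j)
    have h0 : 0 < (A i j) ^ 2 := by positivity
    have h1 : (A i j) ^ 2 ≤ ∑ j', (A i j') ^ 2 :=
      Finset.single_le_sum (f := fun j' => (A i j') ^ 2) (fun _ _ => sq_nonneg _)
        (Finset.mem_univ j)
    have h2 : ∑ j', (A i j') ^ 2 ≤ ∑ i', ∑ j', (A i' j') ^ 2 :=
      Finset.single_le_sum (f := fun i' => ∑ j', (A i' j') ^ 2)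
        (fun i' _ => Finset.sum_nonneg fun _ _ => sq_nonneg _) (Finset.mem_univ i)
    linarith
  have hFne : frobSq A ≠ 0 := ne_of_gt hF
  have hclosed : IsClosed S := by
    rw [hS]
    have heq : {y : EuclideanSpace ℝ (Fin n) | ∀ i, A.mulVec y i ≤ b i}
        = ⋂ i, {y : EuclideanSpace ℝ (Fin n) | A.mulVec y i ≤ b i} := by
      ext z; simp
    rw [heq]
    refine isClosed_iInter fun i => isClosed_le ?_ continuous_const
    have : (fun y : EuclideanSpace ℝ (Fin n) => A.mulVec y i)
        = fun y => ∑ j, A i j * y j := rfl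
    rw [this]
    exact continuous_finset_sum _ fun j _ => continuous_const.mul ((continuous_apply j).comp (PiLp.continuous_ofLp 2 _))
  obtain ⟨y, hyS, hxy⟩ := hclosed.exists_infDist_eq_dist hS_ne x
  have hyb : ∀ i, A.mulVec y i ≤ b i := by rw [hS] at hyS; exact hyS
  have key : ∀ i : Fin m,
      ∑ j, ((A i j) ^ 2 / frobSq A) * (Metric.infDist (dsapStep A b α x i j) S) ^ 2 ≤
      (∑ j, (A i j) ^ 2 / frobSq A) * dist x y ^ 2 +
        (((n : ℝ) * α ^ 2 - 2 * α) / frobSq A) * (max 0 (A.mulVec x i - b i)) ^ 2 := by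
    intro i
    by_cases hsat : A.mulVec x i ≤ b i
    · have hr : max 0 (A.mulVec x i - b i) = 0 := max_eq_left (by linarith)
      have hstep : ∀ j, dsapStep A b α x i j = x := fun j => if_pos hsat
      simp only [hstep, hr, hxy]
      rw [← Finset.sum_mul]
      simp
    · push_neg at hsat
      set c := A.mulVec x i - b i with hcdef
      have hc : 0 < c := by simp only [hcdef]; linarith
      have hr : max 0 (A.mulVec x i - b i) = c := max_eq_right hc.le
      rw [hr]
      have hns : ¬ A.mulVec x i ≤ b i := not_le.2 hsat
      have ptwise : ∀ j : Fin n,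
          ((A i j) ^ 2 / frobSq A) * (Metric.infDist (dsapStep A b α x i j) S) ^ 2 ≤
          ((A i j) ^ 2 / frobSq A) * dist x y ^ 2
            - (2 * α * c / frobSq A) * (A i j * (x j - y j))
            + α ^ 2 * c ^ 2 / frobSq A := by
        intro j
        by_cases hz : A i j = 0
        · have hstep : dsapStep A b α x i j = x := by simp [dsapStep, hns, hz]
          rw [hstep, hz]
          have : (0:ℝ) ^ 2 / frobSq A = 0 := by simp
          rw [this]
          simp only [zero_mul, mul_zero, sub_zero, zero_sub, neg_zero, zero_add]
          positivity
        · have hstep : dsapStep A b α x i j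
              = Function.update x j (x j + α * ((b i - A.mulVec x i) / A i j)) := by
            simp [dsapStep, hns, hz]
          have hle : Metric.infDist (dsapStep A b α x i j) S
              ≤ dist (dsapStep A b α x i j) y := Metric.infDist_le_dist_of_mem hyS
          have hsq : (Metric.infDist (dsapStep A b α x i j) S) ^ 2
              ≤ (dist (dsapStep A b α x i j) y) ^ 2 :=
            pow_le_pow_left₀ Metric.infDist_nonneg hle 2
          have h1 : ((A i j) ^ 2 / frobSq A) * (Metric.infDist (dsapStep A b α x i j) S) ^ 2
              ≤ ((A i j) ^ 2 / frobSq A) * (dist (dsapStep A b α x i j) y) ^ 2 :=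
            mul_le_mul_of_nonneg_left hsq (by positivity)
          refine h1.trans_eq ?_
          rw [dist_update_sq x y _ j _ hstep]
          have hv : x j + α * ((b i - A.mulVec x i) / A i j) - y j
              = (x j - y j) - α * c / A i j := by
            rw [hcdef]; ring
          rw [hv]
          field_simp
          ring
      have hT : ∑ j, A i j * (x j - y j) = A.mulVec x i - A.mulVec y i := by
        simp [Matrix.mulVec, dotProduct, mul_sub, Finset.sum_sub_distrib]
      calc ∑ j, ((A i j) ^ 2 / frobSq A) * (Metric.infDist (dsapStep A b α x i j) S) ^ 2
          ≤ ∑ j, (((A i j) ^ 2 / frobSq A) * dist x y ^ 2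
              - (2 * α * c / frobSq A) * (A i j * (x j - y j))
              + α ^ 2 * c ^ 2 / frobSq A) := Finset.sum_le_sum fun j _ => ptwise j
        _ = (∑ j, (A i j) ^ 2 / frobSq A) * dist x y ^ 2
              - (2 * α * c / frobSq A) * (A.mulVec x i - A.mulVec y i)
              + (n : ℝ) * (α ^ 2 * c ^ 2 / frobSq A) := by
            rw [Finset.sum_add_distrib, Finset.sum_sub_distrib, ← Finset.sum_mul,
              ← Finset.mul_sum, hT, Finset.sum_const, Finset.card_univ, Fintype.card_fin,
              nsmul_eq_mul]
        _ ≤ (∑ j, (A i j) ^ 2 / frobSq A) * dist x y ^ 2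
              + (((n : ℝ) * α ^ 2 - 2 * α) / frobSq A) * c ^ 2 := by
            have hTc : c ≤ A.mulVec x i - A.mulVec y i := by
              have := hyb i
              simp only [hcdef]
              linarith
            have h1 : 2 * α * c * c ≤ 2 * α * c * (A.mulVec x i - A.mulVec y i) :=
              mul_le_mul_of_nonneg_left hTc (by positivity)
            have h2 : 2 * α * c * c / frobSq A
                ≤ 2 * α * c * (A.mulVec x i - A.mulVec y i) / frobSq A :=
              div_le_div_of_nonneg_right h1 hF.le
            have e1 : (2 * α * c / frobSq A) * (A.mulVec x i - A.mulVec y i)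
                = 2 * α * c * (A.mulVec x i - A.mulVec y i) / frobSq A := by ring
            have e2 : (((n : ℝ) * α ^ 2 - 2 * α) / frobSq A) * c ^ 2
                = (n : ℝ) * (α ^ 2 * c ^ 2 / frobSq A) - 2 * α * c * c / frobSq A := by
              ring
            rw [e1, e2]
            linarith
  have sum1 : ∑ i, ∑ j, (A i j) ^ 2 / frobSq A = 1 := by
    simp only [← Finset.sum_div]
    exact div_self hFne
  have hres : ‖posRes A b x‖ ^ 2 = ∑ i, (max 0 (A.mulVec x i - b i)) ^ 2 := by
    rw [eucl_norm_sq]; rfl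
  calc ∑ i, ∑ j, ((A i j) ^ 2 / frobSq A) * (Metric.infDist (dsapStep A b α x i j) S) ^ 2
      ≤ ∑ i, ((∑ j, (A i j) ^ 2 / frobSq A) * dist x y ^ 2 +
          (((n : ℝ) * α ^ 2 - 2 * α) / frobSq A) * (max 0 (A.mulVec x i - b i)) ^ 2) :=
        Finset.sum_le_sum fun i _ => key i
    _ = (∑ i, ∑ j, (A i j) ^ 2 / frobSq A) * dist x y ^ 2 +
          (((n : ℝ) * α ^ 2 - 2 * α) / frobSq A) * ∑ i, (max 0 (A.mulVec x i - b i)) ^ 2 := by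
        rw [Finset.sum_add_distrib, ← Finset.sum_mul, ← Finset.mul_sum]
    _ = (Metric.infDist x S) ^ 2 +
          (((n : ℝ) * α ^ 2 - 2 * α) / frobSq A) * ‖posRes A b x‖ ^ 2 := by
        rw [sum1, one_mul, hres, hxy]
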